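/- For all real numbers t₀ and t, |G(t + t₀) − G(t₀)| ≤ G'(t₀)·(exp(|t|) − 1). Moreover, if |t| ≤ 1 then exp(|t|) − 1 ≤ 2·|t|, so in that case |G(t + t₀) − G(t₀)| ≤ 2·G'(t₀)·|t|. -/

import Mathlib

/-- The logistic link function `G(t) = exp t / (1 + exp t)`. -/
noncomputable def logistic (t : ℝ) : ℝ := Real.exp t / (1 + Real.exp t)

/-- The derivative of the logistic link function: `G'(t) = G(t)·(1 − G(t))`. -/
noncomputable def logisticDeriv (t : ℝ) : ℝ := logistic t * (1 - logistic t)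

lemma logistic_key (t₀ t : ℝ) :
    |logistic (t + t₀) - logistic t₀| ≤ logisticDeriv t₀ * (Real.exp |t| - 1) := by
  set a := Real.exp t₀ with ha'
  set b := Real.exp t with hb'
  have ha : 0 < a := Real.exp_pos _
  have hb : 0 < b := Real.exp_pos _
  have h1a : (0:ℝ) < 1 + a := by linarith
  have h1ba : (0:ℝ) < 1 + b * a := by positivity
  have habs : logistic (t + t₀) - logistic t₀ = a * (b - 1) / ((1 + b * a) * (1 + a)) := by
    unfold logistic
    rw [Real.exp_add, ← ha', ← hb']
    field_simp
    ring
  have hD : logisticDeriv t₀ = a / ((1 + a) * (1 + a)) := by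
    unfold logisticDeriv logistic
    rw [← ha']
    field_simp
    ring
  rw [habs, hD, abs_div, abs_of_pos (by positivity : (0:ℝ) < (1 + b * a) * (1 + a)),
    abs_mul, abs_of_pos ha]
  rcases le_or_gt 0 t with ht | ht
  · have hE : Real.exp |t| = b := by rw [abs_of_nonneg ht]
    have hb1 : 1 ≤ b := by rw [hb']; exact Real.one_le_exp ht
    rw [hE, abs_of_nonneg (by linarith : (0:ℝ) ≤ b - 1)]
    rw [div_le_iff₀ (by positivity)]
    have key : a / ((1 + a) * (1 + a)) * (b - 1) * ((1 + b * a) * (1 + a))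
        = a * (b - 1) * ((1 + b * a) / (1 + a)) := by
      field_simp
    rw [key]
    have h2 : (1:ℝ) ≤ (1 + b * a) / (1 + a) := by
      rw [le_div_iff₀ h1a]
      nlinarith
    nlinarith [mul_nonneg (mul_nonneg ha.le (by linarith : (0:ℝ) ≤ b - 1)) (by linarith : (0:ℝ) ≤ (1 + b * a) / (1 + a) - 1)]
  · have hE : Real.exp |t| = 1 / b := by
      rw [abs_of_neg ht, Real.exp_neg, ← hb', one_div]
    have hb1 : b < 1 := by rw [hb']; exact Real.exp_lt_one_iff.mpr ht
    rw [hE, abs_of_neg (by linarith : b - 1 < 0)]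
    rw [div_le_iff₀ (by positivity)]
    have hbinv : 1 ≤ 1 / b := by rw [le_div_iff₀ hb]; linarith
    have hrw : a / ((1 + a) * (1 + a)) * (1 / b - 1) * ((1 + b * a) * (1 + a))
        = a * (1 - b) * ((1 / b + a) / (1 + a)) := by
      field_simp
    rw [hrw]
    have hc : 1 ≤ (1 / b + a) / (1 + a) := by
      rw [le_div_iff₀ h1a]; linarith
    nlinarith [mul_nonneg (mul_nonneg ha.le (by linarith : (0:ℝ) ≤ 1 - b))
      (by linarith : (0:ℝ) ≤ (1 / b + a) / (1 + a) - 1)]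

/-- Lemma B.3 (auxiliary bound for sparsity analysis): for all `t₀ t : ℝ`,
`|G(t + t₀) − G(t₀)| ≤ G'(t₀)·(exp |t| − 1)`; moreover, if `|t| ≤ 1` then
`exp |t| − 1 ≤ 2|t|`, so in that case `|G(t + t₀) − G(t₀)| ≤ 2·G'(t₀)·|t|`. -/
theorem logistic_increment_bound (t₀ t : ℝ) :
    |logistic (t + t₀) - logistic t₀| ≤ logisticDeriv t₀ * (Real.exp |t| - 1) ∧
      (|t| ≤ 1 →
        Real.exp |t| - 1 ≤ 2 * |t| ∧
          |logistic (t + t₀) - logistic t₀| ≤ 2 * logisticDeriv t₀ * |t|) := by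
  have hkey := logistic_key t₀ t
  refine ⟨hkey, fun ht1 => ?_⟩
  have hx : (0:ℝ) ≤ |t| := abs_nonneg t
  have hexp : Real.exp |t| - 1 ≤ 2 * |t| := by
    have hconv := convexOn_exp.2 (Set.mem_univ (0:ℝ)) (Set.mem_univ (1:ℝ))
      (by linarith : (0:ℝ) ≤ 1 - |t|) hx (by ring)
    simp only [smul_eq_mul, mul_zero, mul_one, zero_add, Real.exp_zero] at hconv
    have he : Real.exp 1 < 3 := by
      have := Real.exp_one_lt_d9; linarith
    nlinarith
  refine ⟨hexp, hkey.trans ?_⟩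
  have hD : 0 ≤ logisticDeriv t₀ := by
    unfold logisticDeriv logistic
    have h := Real.exp_pos t₀
    have h1 : (0:ℝ) < 1 + Real.exp t₀ := by linarith
    have h2 : Real.exp t₀ / (1 + Real.exp t₀) ≤ 1 := by
      rw [div_le_one h1]; linarith
    exact mul_nonneg (le_of_lt (div_pos h h1)) (by linarith)
  calc logisticDeriv t₀ * (Real.exp |t| - 1) ≤ logisticDeriv t₀ * (2 * |t|) :=
        mul_le_mul_of_nonneg_left hexp hD
    _ = 2 * logisticDeriv t₀ * |t| := by ring
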